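/- Let |g|<1 and theta, mu in [0, pi]. Define u_plus = 1 + g^2 - 2g*cos(theta+mu) and u_minus = 1 + g^2 - 2g*cos(theta-mu). Then (1/pi) * integral from 0 to pi of ds/sqrt(1 - 2g(cos theta cos mu + sin theta sin mu cos s) + g^2) equals (2/(pi*sqrt(u_plus))) * K0((u_plus - u_minus)/u_plus). -/
import Mathlib


open Real

/-- The complete elliptic integral of the first kind, as a function of the modulus `m`. -/
noncomputable def K0 (m : ℝ) : ℝ :=
  ∫ s in (0:ℝ)..(π/2), 1 / Real.sqrt (1 - m * Real.sin s ^ 2)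

lemma aux_integral (A B : ℝ) (hA : 0 < A + B) :
    (∫ s in (0:ℝ)..π, 1 / Real.sqrt (A - B * Real.cos s))
      = 2 * (Real.sqrt (A + B))⁻¹ * K0 (2*B/(A+B)) := by
  have key : ∀ t : ℝ, 1 / Real.sqrt (A - B * Real.cos (π - 2*t))
      = (Real.sqrt (A+B))⁻¹ * (1 / Real.sqrt (1 - (2*B/(A+B)) * Real.sin t ^ 2)) := by
    intro t
    have h1 : A - B * Real.cos (π - 2*t) = (A+B) * (1 - (2*B/(A+B)) * Real.sin t ^ 2) := by
      rw [Real.cos_pi_sub, Real.cos_two_mul, Real.sin_sq]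
      field_simp
      ring
    rw [h1, Real.sqrt_mul hA.le, one_div, one_div, mul_inv]
  have e1 : (∫ s in (0:ℝ)..π, 1 / Real.sqrt (A - B * Real.cos s))
      = ∫ s in (0:ℝ)..π, 1 / Real.sqrt (A - B * Real.cos (π - s)) := by
    rw [intervalIntegral.integral_comp_sub_left (fun s => 1 / Real.sqrt (A - B * Real.cos s)) π]
    norm_num
  have e2 : (∫ s in (0:ℝ)..(π/2), 1 / Real.sqrt (A - B * Real.cos (π - 2*s)))
      = 2⁻¹ * ∫ s in (0:ℝ)..π, 1 / Real.sqrt (A - B * Real.cos (π - s)) := by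
    have := intervalIntegral.integral_comp_mul_left (a := (0:ℝ)) (b := π/2) (c := (2:ℝ))
      (fun x => 1 / Real.sqrt (A - B * Real.cos (π - x))) two_ne_zero
    simpa [mul_div_cancel₀] using this
  have e3 : (∫ s in (0:ℝ)..(π/2), 1 / Real.sqrt (A - B * Real.cos (π - 2*s)))
      = (Real.sqrt (A+B))⁻¹ * K0 (2*B/(A+B)) := by
    rw [intervalIntegral.integral_congr (g :=
      fun s => (Real.sqrt (A+B))⁻¹ * (1 / Real.sqrt (1 - (2*B/(A+B)) * Real.sin s ^ 2)))
      (fun s _ => key s)]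
    rw [intervalIntegral.integral_const_mul, K0]
  rw [e2] at e3
  rw [e1]
  linear_combination 2 * e3

theorem H0_elliptic_integral_form (g θ μ : ℝ) (hg : |g| < 1)
    (hθ : θ ∈ Set.Icc 0 π) (hμ : μ ∈ Set.Icc 0 π) :
    (1/π) * ∫ s in (0:ℝ)..π,
        1 / Real.sqrt (1 - 2*g*(Real.cos θ * Real.cos μ + Real.sin θ * Real.sin μ * Real.cos s) + g^2)
      = (2 / (π * Real.sqrt (1 + g^2 - 2*g*Real.cos (θ + μ))))
          * K0 (((1 + g^2 - 2*g*Real.cos (θ + μ)) - (1 + g^2 - 2*g*Real.cos (θ - μ)))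
              / (1 + g^2 - 2*g*Real.cos (θ + μ))) := by
  have hg' := abs_lt.mp hg
  have hAB : (1 - 2*g*(Real.cos θ * Real.cos μ) + g^2) + 2*g*(Real.sin θ * Real.sin μ)
      = 1 + g^2 - 2*g*Real.cos (θ + μ) := by
    rw [Real.cos_add]; ring
  have hu : 0 < 1 + g^2 - 2*g*Real.cos (θ + μ) := by
    rcases le_or_gt 0 g with h | h
    · nlinarith [Real.cos_le_one (θ+μ), sq_nonneg (1-g)]
    · nlinarith [Real.neg_one_le_cos (θ+μ), sq_nonneg (1+g)]
  have hm : ((1 + g^2 - 2*g*Real.cos (θ + μ)) - (1 + g^2 - 2*g*Real.cos (θ - μ)))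
      = 2*(2*g*(Real.sin θ * Real.sin μ)) := by
    rw [Real.cos_add, Real.cos_sub]; ring
  have hint : (∫ s in (0:ℝ)..π,
        1 / Real.sqrt (1 - 2*g*(Real.cos θ * Real.cos μ + Real.sin θ * Real.sin μ * Real.cos s) + g^2))
      = ∫ s in (0:ℝ)..π,
        1 / Real.sqrt ((1 - 2*g*(Real.cos θ * Real.cos μ) + g^2)
          - (2*g*(Real.sin θ * Real.sin μ)) * Real.cos s) := by
    apply intervalIntegral.integral_congr
    intro s _
    ring_nf
  rw [hint, aux_integral _ _ (by rw [hAB]; exact hu), hAB, ← hm]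
  ring
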